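/- Let c_s ≥ 0, let U ⊆ ℝ^d be open, and let u₁, u₀, u₋₁ : U → ℝ be nonnegative functions differentiable at a point x ∈ U. Define ũ₁ = (u₁² + u₀²/2)^{1/2} and ũ₋₁ = (u₋₁² + u₀²/2)^{1/2}. Then ũ₁² + ũ₋₁² = u₁² + u₀² + u₋₁² and ũ₁² − ũ₋₁² = u₁² − u₋₁² on U; and if ũ₁(x) > 0 and ũ₋₁(x) > 0, then ũ₁ and ũ₋₁ are differentiable at x and ( Σ_j ‖∇u_j(x)‖² + c_s(2u₀(x)²(u₁(x) − u₋₁(x))² + (u₁(x)² − u₋₁(x)²)²) ) − ( ‖∇ũ₁(x)‖² + ‖∇ũ₋₁(x)‖² + c_s(ũ₁(x)² − ũ₋₁(x)²)² ) = ( Σ_j ‖∇u_j(x)‖² − ‖∇ũ₁(x)‖² − ‖∇ũ₋₁(x)‖² ) + 2c_s u₀(x)²(u₁(x) − u₋₁(x))² ≥ 0. -/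

import Mathlib

/-- Pointwise energy comparison for antiferromagnetic spin-1 condensates (`c_s ≥ 0`).
With `ũ₁ = (u₁² + u₀²/2)^{1/2}` and `ũ₋₁ = (u₋₁² + u₀²/2)^{1/2}` one has
`ũ₁² + ũ₋₁² = u₁² + u₀² + u₋₁²` and `ũ₁² − ũ₋₁² = u₁² − u₋₁²` on `U`; and at any point `x`
of differentiability where `ũ₁(x), ũ₋₁(x) > 0`, the redistributed triple `(ũ₁, 0, ũ₋₁)`
has no larger energy density:
`(Σ‖∇uⱼ‖² + c_s(2u₀²(u₁−u₋₁)² + (u₁²−u₋₁²)²)) − (‖∇ũ₁‖² + ‖∇ũ₋₁‖² + c_s(ũ₁²−ũ₋₁²)²)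
 = (Σ‖∇uⱼ‖² − ‖∇ũ₁‖² − ‖∇ũ₋₁‖²) + 2c_s u₀²(u₁−u₋₁)² ≥ 0`. -/

lemma norm_gradient_eq {E : Type*} [NormedAddCommGroup E] [InnerProductSpace ℝ E]
    [CompleteSpace E] (f : E → ℝ) (x : E) : ‖gradient f x‖ = ‖fderiv ℝ f x‖ := by
  rw [gradient]
  exact (InnerProductSpace.toDual ℝ E).symm.norm_map _

lemma key_lemma {E : Type*} [NormedAddCommGroup E] [InnerProductSpace ℝ E]
    [CompleteSpace E] (f g : E → ℝ) (x : E)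
    (hf : DifferentiableAt ℝ f x) (hg : DifferentiableAt ℝ g x)
    (hfx : 0 ≤ f x) (hgx : 0 ≤ g x) (hpos : 0 < f x ^ 2 + g x ^ 2 / 2) :
    DifferentiableAt ℝ (fun y => Real.sqrt (f y ^ 2 + g y ^ 2 / 2)) x ∧
      ‖fderiv ℝ (fun y => Real.sqrt (f y ^ 2 + g y ^ 2 / 2)) x‖ ^ 2
        ≤ ‖fderiv ℝ f x‖ ^ 2 + ‖fderiv ℝ g x‖ ^ 2 / 2 := by
  set F := fderiv ℝ f x
  set G := fderiv ℝ g x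
  have hh : HasFDerivAt (fun y => f y ^ 2 + g y ^ 2 / 2)
      ((2 * f x) • F + (g x) • G) x := by
    have h1 : HasFDerivAt (fun y => f y ^ 2) ((2 * f x) • F) x := by
      have := (hf.hasFDerivAt.mul hf.hasFDerivAt)
      convert this using 1
      · rfl
      · rfl
      · funext y; simp [Pi.mul_apply]; ring
      · ext v; simp; ring
    have h2 : HasFDerivAt (fun y => g y ^ 2 / 2) ((g x) • G) x := by
      have := ((hg.hasFDerivAt.mul hg.hasFDerivAt).const_smul (2:ℝ)⁻¹)
      convert this using 1
      · rfl
      · rfl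
      · funext y; simp; ring
      · ext v; simp; ring
    exact h1.add h2
  have hne : f x ^ 2 + g x ^ 2 / 2 ≠ 0 := ne_of_gt hpos
  set s := Real.sqrt (f x ^ 2 + g x ^ 2 / 2) with hs
  have hspos : 0 < s := Real.sqrt_pos.2 hpos
  have hssq : s ^ 2 = f x ^ 2 + g x ^ 2 / 2 := Real.sq_sqrt hpos.le
  have hsq : HasFDerivAt (fun y => Real.sqrt (f y ^ 2 + g y ^ 2 / 2))
      ((1 / (2 * s)) • ((2 * f x) • F + (g x) • G)) x := hh.sqrt hne
  refine ⟨hsq.differentiableAt, ?_⟩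
  rw [hsq.fderiv]
  have hnorm : ‖(1 / (2 * s)) • ((2 * f x) • F + (g x) • G)‖
      ≤ (1 / (2 * s)) * (2 * f x * ‖F‖ + g x * ‖G‖) := by
    rw [norm_smul]
    have : ‖(2 * f x) • F + (g x) • G‖ ≤ 2 * f x * ‖F‖ + g x * ‖G‖ := by
      refine (norm_add_le _ _).trans ?_
      rw [norm_smul, norm_smul]
      simp [abs_of_nonneg hfx, abs_of_nonneg hgx, abs_of_nonneg, mul_nonneg]
    calc ‖(1 / (2 * s))‖ * ‖(2 * f x) • F + (g x) • G‖
        ≤ ‖(1 / (2 * s))‖ * (2 * f x * ‖F‖ + g x * ‖G‖) := by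
          gcongr
      _ = (1 / (2 * s)) * (2 * f x * ‖F‖ + g x * ‖G‖) := by
          rw [Real.norm_eq_abs, abs_of_pos (by positivity)]
  have hRHSnn : 0 ≤ (1 / (2 * s)) * (2 * f x * ‖F‖ + g x * ‖G‖) := by positivity
  have hsq2 : ((1 / (2 * s)) * (2 * f x * ‖F‖ + g x * ‖G‖)) ^ 2
      ≤ ‖F‖ ^ 2 + ‖G‖ ^ 2 / 2 := by
    rw [div_mul_eq_mul_div, one_mul, div_pow]
    rw [div_le_iff₀ (by positivity)]
    have h4 : (2 * s) ^ 2 = 4 * f x ^ 2 + 2 * g x ^ 2 := by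
      rw [mul_pow, hssq]; ring
    rw [h4]
    nlinarith [sq_nonneg (f x * ‖G‖ - g x * ‖F‖), sq_nonneg (f x * ‖G‖ + g x * ‖F‖)]
  calc ‖(1 / (2 * s)) • ((2 * f x) • F + (g x) • G)‖ ^ 2
      ≤ ((1 / (2 * s)) * (2 * f x * ‖F‖ + g x * ‖G‖)) ^ 2 := by
        exact pow_le_pow_left₀ (norm_nonneg _) hnorm 2
    _ ≤ ‖F‖ ^ 2 + ‖G‖ ^ 2 / 2 := hsq2


theorem antiferro_pointwise_energy_comparison {d : ℕ} (cs : ℝ) (hcs : 0 ≤ cs)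
    (U : Set (EuclideanSpace ℝ (Fin d))) (hU : IsOpen U)
    (u1 u0 um1 : EuclideanSpace ℝ (Fin d) → ℝ)
    (h1 : ∀ y ∈ U, 0 ≤ u1 y) (h0 : ∀ y ∈ U, 0 ≤ u0 y) (hm1 : ∀ y ∈ U, 0 ≤ um1 y)
    (x : EuclideanSpace ℝ (Fin d)) (hx : x ∈ U)
    (hd1 : DifferentiableAt ℝ u1 x) (hd0 : DifferentiableAt ℝ u0 x)
    (hdm1 : DifferentiableAt ℝ um1 x)
    (v1 vm1 : EuclideanSpace ℝ (Fin d) → ℝ)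
    (hv1 : v1 = fun y => Real.sqrt ((u1 y) ^ 2 + (u0 y) ^ 2 / 2))
    (hvm1 : vm1 = fun y => Real.sqrt ((um1 y) ^ 2 + (u0 y) ^ 2 / 2)) :
    (∀ y ∈ U, (v1 y) ^ 2 + (vm1 y) ^ 2 = (u1 y) ^ 2 + (u0 y) ^ 2 + (um1 y) ^ 2) ∧
    (∀ y ∈ U, (v1 y) ^ 2 - (vm1 y) ^ 2 = (u1 y) ^ 2 - (um1 y) ^ 2) ∧
    (0 < v1 x → 0 < vm1 x →
      DifferentiableAt ℝ v1 x ∧ DifferentiableAt ℝ vm1 x ∧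
      (‖gradient u1 x‖ ^ 2 + ‖gradient u0 x‖ ^ 2 + ‖gradient um1 x‖ ^ 2
          + cs * (2 * (u0 x) ^ 2 * (u1 x - um1 x) ^ 2 + ((u1 x) ^ 2 - (um1 x) ^ 2) ^ 2))
        - (‖gradient v1 x‖ ^ 2 + ‖gradient vm1 x‖ ^ 2
            + cs * ((v1 x) ^ 2 - (vm1 x) ^ 2) ^ 2)
        = (‖gradient u1 x‖ ^ 2 + ‖gradient u0 x‖ ^ 2 + ‖gradient um1 x‖ ^ 2
            - ‖gradient v1 x‖ ^ 2 - ‖gradient vm1 x‖ ^ 2)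
          + 2 * cs * (u0 x) ^ 2 * (u1 x - um1 x) ^ 2 ∧
      0 ≤ (‖gradient u1 x‖ ^ 2 + ‖gradient u0 x‖ ^ 2 + ‖gradient um1 x‖ ^ 2
            - ‖gradient v1 x‖ ^ 2 - ‖gradient vm1 x‖ ^ 2)
          + 2 * cs * (u0 x) ^ 2 * (u1 x - um1 x) ^ 2) := by
  
  have sq1 : ∀ y, (v1 y) ^ 2 = (u1 y) ^ 2 + (u0 y) ^ 2 / 2 := by
    intro y; rw [hv1]; exact Real.sq_sqrt (by positivity)
  have sq2 : ∀ y, (vm1 y) ^ 2 = (um1 y) ^ 2 + (u0 y) ^ 2 / 2 := by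
    intro y; rw [hvm1]; exact Real.sq_sqrt (by positivity)
  refine ⟨fun y _ => by rw [sq1, sq2]; ring, fun y _ => by rw [sq1, sq2]; ring, ?_⟩
  intro hp1 hpm1
  have hpos1 : 0 < (u1 x) ^ 2 + (u0 x) ^ 2 / 2 := by
    have := hp1; rw [hv1] at this; exact Real.sqrt_pos.mp this
  have hpos2 : 0 < (um1 x) ^ 2 + (u0 x) ^ 2 / 2 := by
    have := hpm1; rw [hvm1] at this; exact Real.sqrt_pos.mp this
  obtain ⟨hdv1, hb1⟩ := key_lemma u1 u0 x hd1 hd0 (h1 x hx) (h0 x hx) hpos1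
  obtain ⟨hdvm1, hbm1⟩ := key_lemma um1 u0 x hdm1 hd0 (hm1 x hx) (h0 x hx) hpos2
  rw [← hv1] at hdv1 hb1
  rw [← hvm1] at hdvm1 hbm1
  refine ⟨hdv1, hdvm1, ?_, ?_⟩
  · have hdiff : (v1 x) ^ 2 - (vm1 x) ^ 2 = (u1 x) ^ 2 - (um1 x) ^ 2 := by
      rw [sq1, sq2]; ring
    rw [hdiff]; ring
  · have e1 := norm_gradient_eq u1 x
    have e0 := norm_gradient_eq u0 x
    have em := norm_gradient_eq um1 x
    have ev1 := norm_gradient_eq v1 x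
    have evm := norm_gradient_eq vm1 x
    rw [e1, e0, em, ev1, evm]
    have hcsterm : 0 ≤ 2 * cs * (u0 x) ^ 2 * (u1 x - um1 x) ^ 2 := by positivity
    linarith [hb1, hbm1]
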